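/- Let d ≤ n be nonnegative integers and let F be a family of subsets of [n] such that the family of symmetric differences F Δ F = {A Δ B : A, B ∈ F} has VC-dimension at most d. Then |F| ≤ 2 · ∑_{k=0}^{⌊d/2⌋} C(n,k). -/

import Mathlib

open Finset
open scoped symmDiff

/-- `F` shatters `M` if every subset of `M` arises as `A ∩ M` for some `A ∈ F`. -/
def ShattersFam {n : ℕ} (F : Finset (Finset (Fin n))) (M : Finset (Fin n)) : Prop :=
  ∀ S ⊆ M, ∃ A ∈ F, A ∩ M = S

/-- The family of symmetric differences `F Δ F`. -/
def symmDiffFam {n : ℕ} (F : Finset (Finset (Fin n))) : Finset (Finset (Fin n)) :=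
  Finset.image₂ (· ∆ ·) F F

namespace DM
variable {n : ℕ}

def ind (S x : Finset (Fin n)) : ZMod 2 := if S ⊆ x then 1 else 0

def SS (n d : ℕ) : Finset (Finset (Fin n)) :=
  (univ : Finset (Fin n)).powerset.filter (fun T => T.card ≤ d)

lemma mem_SS {d : ℕ} {S : Finset (Fin n)} : S ∈ SS n d ↔ S.card ≤ d := by
  simp [SS]

lemma cast_two_pow (k : ℕ) (hk : 0 < k) : ((2 ^ k : ℕ) : ZMod 2) = 0 := by
  rw [Nat.cast_pow]
  have : ((2:ℕ) : ZMod 2) = 0 := by decide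
  rw [this, zero_pow hk.ne']

lemma sum_ind (X : Finset (Finset (Fin n))) (b : Finset (Fin n)) :
    ∑ T ∈ X, ind T b = ((X.filter (fun T => T ⊆ b)).card : ZMod 2) := by
  rw [← Finset.sum_boole]; rfl

lemma split (S a b : Finset (Fin n)) :
    ind S (a ∆ b) = ∑ T ∈ S.powerset, ind T a * ind (S \ T) b := by
  have hterm : ∀ T, ind T a * ind (S \ T) b
      = if (T ⊆ a ∧ S \ T ⊆ b) then (1 : ZMod 2) else 0 := by
    intro T
    by_cases h1 : T ⊆ a <;> by_cases h2 : S \ T ⊆ b <;> simp [ind, h1, h2]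
  rw [Finset.sum_congr rfl fun T _ => hterm T, Finset.sum_boole]
  have hset : S.powerset.filter (fun T => T ⊆ a ∧ S \ T ⊆ b) = Finset.Icc (S \ b) (S ∩ a) := by
    ext T
    simp only [mem_filter, mem_powerset, Finset.mem_Icc, le_eq_subset]
    constructor
    · rintro ⟨hTS, hTa, hSTb⟩
      refine ⟨fun i hi => ?_, fun i hi => mem_inter.2 ⟨hTS hi, hTa hi⟩⟩
      · simp only [mem_sdiff] at hi
        by_contra hiT
        exact hi.2 (hSTb (mem_sdiff.2 ⟨hi.1, hiT⟩))
    · rintro ⟨hlT, hTu⟩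
      refine ⟨fun i hi => (mem_inter.1 (hTu hi)).1, fun i hi => (mem_inter.1 (hTu hi)).2, ?_⟩
      intro i hi
      simp only [mem_sdiff] at hi
      by_contra hib
      exact hi.2 (hlT (mem_sdiff.2 ⟨hi.1, hib⟩))
  rw [hset]
  by_cases hlu : S \ b ⊆ S ∩ a
  · rw [Finset.card_Icc_finset hlu]
    by_cases heq : (S ∩ a).card - (S \ b).card = 0
    · have hle : (S ∩ a).card ≤ (S \ b).card := Nat.sub_eq_zero_iff_le.1 heq
      have hequ : S \ b = S ∩ a := Finset.eq_of_subset_of_card_le hlu hle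
      rw [heq, pow_zero, Nat.cast_one]
      have hsub : S ⊆ a ∆ b := by
        intro i hi
        rw [Finset.mem_symmDiff]
        by_cases hib : i ∈ b
        · right
          refine ⟨hib, fun hia => ?_⟩
          have : i ∈ S \ b := hequ ▸ mem_inter.2 ⟨hi, hia⟩
          exact (mem_sdiff.1 this).2 hib
        · left
          have : i ∈ S ∩ a := hequ ▸ mem_sdiff.2 ⟨hi, hib⟩
          exact ⟨(mem_inter.1 this).2, hib⟩
      simp [ind, hsub]
    · rw [cast_two_pow _ (Nat.pos_of_ne_zero heq)]
      have hlt : S \ b ⊂ S ∩ a :=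
        Finset.ssubset_iff_subset_ne.2 ⟨hlu, fun h => heq (by rw [h, Nat.sub_self])⟩
      obtain ⟨i, hiu, hil⟩ := Finset.exists_of_ssubset hlt
      have hnot : ¬ S ⊆ a ∆ b := by
        intro hsub
        have hi := hsub (mem_inter.1 hiu).1
        rw [Finset.mem_symmDiff] at hi
        have hia : i ∈ a := (mem_inter.1 hiu).2
        have hib : i ∈ b := by
          by_contra hib
          exact hil (mem_sdiff.2 ⟨(mem_inter.1 hiu).1, hib⟩)
        rcases hi with ⟨_, h⟩ | ⟨_, h⟩ <;> [exact h hib; exact h hia]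
      simp [ind, hnot]
  · rw [Finset.Icc_eq_empty hlu, Finset.card_empty, Nat.cast_zero]
    obtain ⟨i, hil, hiu⟩ := Finset.not_subset.1 hlu
    have hnot : ¬ S ⊆ a ∆ b := by
      intro hsub
      have hiS : i ∈ S := (mem_sdiff.1 hil).1
      have hib : i ∉ b := (mem_sdiff.1 hil).2
      have hia : i ∉ a := fun hia => hiu (mem_inter.2 ⟨hiS, hia⟩)
      have := hsub hiS
      rw [Finset.mem_symmDiff] at this
      rcases this with ⟨h, _⟩ | ⟨h, _⟩ <;> [exact hia h; exact hib h]
    simp [ind, hnot]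

def Expr (B : Finset (Finset (Fin n))) (d : ℕ) (g : Finset (Fin n) → ZMod 2) : Prop :=
  ∃ c : Finset (Fin n) → ZMod 2, ∀ b ∈ B, g b = ∑ S ∈ SS n d, c S * ind S b

lemma expr_sum {B : Finset (Finset (Fin n))} {d : ℕ} {ι : Type*} [DecidableEq ι]
    (I : Finset ι) (f : ι → Finset (Fin n) → ZMod 2)
    (hf : ∀ i ∈ I, Expr B d (f i)) : Expr B d (fun b => ∑ i ∈ I, f i b) := by
  induction I using Finset.induction with
  | empty => exact ⟨0, by simp⟩
  | insert x I' hx ih =>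
    obtain ⟨c1, hc1⟩ := hf x (mem_insert_self _ _)
    obtain ⟨c2, hc2⟩ := ih fun i hi => hf i (mem_insert_of_mem hi)
    refine ⟨c1 + c2, fun b hb => ?_⟩
    simp only [Finset.sum_insert hx, hc1 b hb, hc2 b hb, Pi.add_apply, add_mul,
      Finset.sum_add_distrib]

lemma expr_ind {B : Finset (Finset (Fin n))} {d : ℕ}
    (hB : ∀ M, ShattersFam B M → M.card ≤ d) (S : Finset (Fin n)) : Expr B d (ind S) := by
  induction S using Finset.strongInduction with
  | _ S ih =>
    by_cases hS : S.card ≤ d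
    · refine ⟨fun T => if T = S then 1 else 0, fun b hb => ?_⟩
      rw [Finset.sum_eq_single S]
      · simp
      · intro T _ hne; simp [hne]
      · intro h; exact absurd (mem_SS.2 hS) h
    · have hns : ¬ ShattersFam B S := fun h => hS (hB S h)
      simp only [ShattersFam] at hns
      push_neg at hns
      obtain ⟨S', hS'sub, hS'⟩ := hns
      have key : ∀ b ∈ B, ind S b
          = ∑ T ∈ (S.powerset.filter (fun T => S' ⊆ T)).erase S, ind T b := by
        intro b hb
        have hzero : ∑ T ∈ S.powerset.filter (fun T => S' ⊆ T), ind T b = 0 := by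
          rw [sum_ind, Finset.filter_filter]
          have hset : S.powerset.filter (fun T => S' ⊆ T ∧ T ⊆ b)
              = Finset.Icc S' (S ∩ b) := by
            ext T
            simp only [mem_filter, mem_powerset, Finset.mem_Icc, le_eq_subset]
            constructor
            · rintro ⟨h1, h2, h3⟩
              exact ⟨h2, fun i hi => mem_inter.2 ⟨h1 hi, h3 hi⟩⟩
            · rintro ⟨h1, h2⟩
              exact ⟨fun i hi => (mem_inter.1 (h2 hi)).1, h1,
                fun i hi => (mem_inter.1 (h2 hi)).2⟩
          rw [hset]
          by_cases hlu : S' ⊆ S ∩ b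
          · rw [Finset.card_Icc_finset hlu]
            refine cast_two_pow _ (Nat.pos_of_ne_zero fun h => ?_)
            have : S ∩ b = S' :=
              (Finset.eq_of_subset_of_card_le hlu (Nat.sub_eq_zero_iff_le.1 h)).symm
            exact hS' b hb (by rwa [Finset.inter_comm] at this)
          · rw [Finset.Icc_eq_empty hlu, Finset.card_empty, Nat.cast_zero]
        have hmem : S ∈ S.powerset.filter (fun T => S' ⊆ T) :=
          mem_filter.2 ⟨mem_powerset_self S, hS'sub⟩
        rw [← Finset.add_sum_erase _ _ hmem] at hzero
        rw [add_eq_zero_iff_eq_neg, CharTwo.neg_eq] at hzero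
        exact hzero
      have hexpr : Expr B d (fun b =>
          ∑ T ∈ (S.powerset.filter (fun T => S' ⊆ T)).erase S, ind T b) := by
        refine expr_sum _ _ fun T hT => ?_
        have hT' := mem_erase.1 hT
        exact ih T (Finset.ssubset_iff_subset_ne.2
          ⟨mem_powerset.1 (mem_filter.1 hT'.2).1, hT'.1⟩)
      obtain ⟨c, hc⟩ := hexpr
      exact ⟨c, fun b hb => (key b hb).trans (hc b hb)⟩

lemma expr_delta {B : Finset (Finset (Fin n))} {d : ℕ}
    (hB : ∀ M, ShattersFam B M → M.card ≤ d) :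
    ∃ c : Finset (Fin n) → ZMod 2, ∀ b ∈ B,
      (if b = ∅ then (1 : ZMod 2) else 0) = ∑ S ∈ SS n d, c S * ind S b := by
  have h1 : ∀ y : Finset (Fin n), ∑ T ∈ (univ : Finset (Fin n)).powerset, ind T y
      = if y = ∅ then (1 : ZMod 2) else 0 := by
    intro y
    rw [sum_ind]
    have hset : (univ : Finset (Fin n)).powerset.filter (fun T => T ⊆ y) = y.powerset := by
      ext T; simp [mem_powerset]
    rw [hset, Finset.card_powerset]
    by_cases hy : y = ∅
    · simp [hy]
    · rw [if_neg hy, cast_two_pow _ (Finset.card_pos.2 (Finset.nonempty_iff_ne_empty.2 hy))]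
  obtain ⟨c, hc⟩ := expr_sum (B := B) (d := d) (univ : Finset (Fin n)).powerset
    (fun T b => ind T b) (fun T _ => expr_ind hB T)
  exact ⟨c, fun b hb => by rw [← h1 b]; exact hc b hb⟩

def Gfun (c : Finset (Fin n) → ZMod 2) (d : ℕ) (T b : Finset (Fin n)) : ZMod 2 :=
  ∑ S ∈ SS n d, if T ⊆ S then c S * ind (S \ T) b else 0

def Hfun (c : Finset (Fin n) → ZMod 2) (d : ℕ) (U a : Finset (Fin n)) : ZMod 2 :=
  ∑ S ∈ SS n d, if U ⊆ S ∧ d / 2 < (S \ U).card then c S * ind (S \ U) a else 0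

lemma regroup (c : Finset (Fin n) → ZMod 2) (d : ℕ) (a b : Finset (Fin n)) :
    ∑ S ∈ SS n d, c S * (∑ T ∈ S.powerset, ind T a * ind (S \ T) b)
    = ∑ T ∈ SS n (d / 2), ind T a * Gfun c d T b
      + ∑ U ∈ SS n (d / 2), Hfun c d U a * ind U b := by
  have lhs_eq : ∀ S : Finset (Fin n),
      c S * (∑ T ∈ S.powerset, ind T a * ind (S \ T) b)
      = (∑ T ∈ S.powerset.filter (fun T => T.card ≤ d / 2), c S * (ind T a * ind (S \ T) b))
        + (∑ T ∈ S.powerset.filter (fun T => ¬ T.card ≤ d / 2),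
            c S * (ind T a * ind (S \ T) b)) := by
    intro S
    rw [Finset.mul_sum, Finset.sum_filter_add_sum_filter_not]
  rw [Finset.sum_congr rfl fun S _ => lhs_eq S, Finset.sum_add_distrib]
  congr 1
  · -- first piece
    have step : ∀ S ∈ SS n d,
        ∑ T ∈ S.powerset.filter (fun T => T.card ≤ d / 2), c S * (ind T a * ind (S \ T) b)
        = ∑ T ∈ SS n (d / 2), if T ⊆ S then ind T a * (c S * ind (S \ T) b) else 0 := by
      intro S _
      have hset : S.powerset.filter (fun T => T.card ≤ d / 2)
          = (SS n (d / 2)).filter (fun T => T ⊆ S) := by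
        ext T; simp [SS, mem_powerset]; tauto
      rw [hset, Finset.sum_filter]
      refine Finset.sum_congr rfl fun T _ => ?_
      split_ifs with h
      · ring
      · rfl
    rw [Finset.sum_congr rfl step, Finset.sum_comm]
    refine Finset.sum_congr rfl fun T _ => ?_
    rw [Gfun, Finset.mul_sum]
    refine Finset.sum_congr rfl fun S _ => ?_
    split_ifs with h
    · ring
    · rw [mul_zero]
  · -- second piece
    have step : ∀ S ∈ SS n d,
        ∑ T ∈ S.powerset.filter (fun T => ¬ T.card ≤ d / 2), c S * (ind T a * ind (S \ T) b)
        = ∑ U ∈ SS n (d / 2),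
            if U ⊆ S ∧ d / 2 < (S \ U).card then (c S * ind (S \ U) a) * ind U b else 0 := by
      intro S hS
      have hreindex : ∑ T ∈ S.powerset.filter (fun T => ¬ T.card ≤ d / 2),
            c S * (ind T a * ind (S \ T) b)
          = ∑ U ∈ S.powerset.filter (fun U => d / 2 < (S \ U).card),
            c S * (ind (S \ U) a * ind U b) := by
        refine Finset.sum_nbij' (fun T => S \ T) (fun U => S \ U) ?_ ?_ ?_ ?_ ?_
        · intro T hT
          have h := mem_filter.1 hT
          have hTS := mem_powerset.1 h.1
          refine mem_filter.2 ⟨mem_powerset.2 (sdiff_subset), ?_⟩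
          simpa [Finset.sdiff_sdiff_eq_self hTS] using Nat.lt_of_not_le h.2
        · intro U hU
          have h := mem_filter.1 hU
          refine mem_filter.2 ⟨mem_powerset.2 (sdiff_subset), ?_⟩
          simpa using Nat.not_le.2 h.2
        · intro T hT
          exact Finset.sdiff_sdiff_eq_self (mem_powerset.1 (mem_filter.1 hT).1)
        · intro U hU
          exact Finset.sdiff_sdiff_eq_self (mem_powerset.1 (mem_filter.1 hU).1)
        · intro T hT
          rw [Finset.sdiff_sdiff_eq_self (mem_powerset.1 (mem_filter.1 hT).1)]
      rw [hreindex]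
      have hset : S.powerset.filter (fun U => d / 2 < (S \ U).card)
          = (SS n (d / 2)).filter (fun U => U ⊆ S ∧ d / 2 < (S \ U).card) := by
        ext U
        simp only [mem_filter, mem_powerset, mem_SS]
        constructor
        · rintro ⟨hUS, hcard⟩
          refine ⟨?_, hUS, hcard⟩
          have h1 : (S \ U).card = S.card - U.card := Finset.card_sdiff_of_subset hUS
          have h2 : S.card ≤ d := mem_SS.1 hS
          have h3 : U.card ≤ S.card := Finset.card_le_card hUS
          omega
        · rintro ⟨_, hUS, hcard⟩; exact ⟨hUS, hcard⟩
      rw [hset, Finset.sum_filter]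
      refine Finset.sum_congr rfl fun U _ => ?_
      split_ifs with h
      · ring
      · rfl
    rw [Finset.sum_congr rfl step, Finset.sum_comm]
    refine Finset.sum_congr rfl fun U _ => ?_
    rw [Hfun, Finset.sum_mul]
    refine Finset.sum_congr rfl fun S _ => ?_
    split_ifs with h
    · ring
    · rw [zero_mul]
lemma card_SS (n D : ℕ) : (SS n D).card = ∑ k ∈ Finset.range (D + 1), n.choose k := by
  have hset : SS n D = (Finset.range (D + 1)).biUnion
      (fun k => Finset.powersetCard k (univ : Finset (Fin n))) := by
    ext S
    simp only [SS, mem_filter, mem_powerset, mem_biUnion, Finset.mem_range,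
      Finset.mem_powersetCard, Nat.lt_succ_iff]
    constructor
    · rintro ⟨h1, h2⟩; exact ⟨S.card, h2, h1, rfl⟩
    · rintro ⟨k, hk, h1, rfl⟩; exact ⟨h1, hk⟩
  rw [hset, Finset.card_biUnion]
  · refine Finset.sum_congr rfl fun k _ => ?_
    rw [Finset.card_powersetCard, Finset.card_univ, Fintype.card_fin]
  · intro x _ y _ hxy
    rw [Function.onFun, Finset.disjoint_left]
    intro S hSx hSy
    rw [Finset.mem_powersetCard] at hSx hSy
    exact hxy (hSx.2 ▸ hSy.2)

lemma final_bound (F : Finset (Finset (Fin n))) (d : ℕ)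
    (Hf : Finset (Fin n) → Finset (Fin n) → ZMod 2)
    (Gf : Finset (Fin n) → Finset (Fin n) → ZMod 2)
    (key : ∀ a ∈ F, ∀ b ∈ F, (if a = b then (1 : ZMod 2) else 0) =
      ∑ T ∈ SS n (d / 2), ind T a * Gf T b + ∑ U ∈ SS n (d / 2), Hf U a * ind U b) :
    F.card ≤ 2 * (SS n (d / 2)).card := by
  classical
  set D := d / 2
  let Φ : (↥F → ZMod 2) → ((↥(SS n D) → ZMod 2) × (↥(SS n D) → ZMod 2)) :=
    fun v => (fun T => ∑ a : ↥F, v a * ind (T : Finset (Fin n)) (a : Finset (Fin n)),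
              fun U => ∑ a : ↥F, v a * Hf (U : Finset (Fin n)) (a : Finset (Fin n)))
  have hΦ : Function.Injective Φ := by
    intro v w h
    have hTall : ∀ T : ↥(SS n D),
        ∑ a : ↥F, (v a - w a) * ind (T : Finset (Fin n)) (a : Finset (Fin n)) = 0 := by
      intro T
      have h1 := congrFun (congrArg Prod.fst h) T
      simp only [Φ] at h1
      rw [← sub_eq_zero] at h1
      rw [← h1, ← Finset.sum_sub_distrib]
      exact Finset.sum_congr rfl fun a _ => by ring
    have hHall : ∀ U : ↥(SS n D),
        ∑ a : ↥F, (v a - w a) * Hf (U : Finset (Fin n)) (a : Finset (Fin n)) = 0 := by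
      intro U
      have h1 := congrFun (congrArg Prod.snd h) U
      simp only [Φ] at h1
      rw [← sub_eq_zero] at h1
      rw [← h1, ← Finset.sum_sub_distrib]
      exact Finset.sum_congr rfl fun a _ => by ring
    funext b
    have expand : v b - w b = ∑ a : ↥F, (v a - w a) *
        (if (a : Finset (Fin n)) = (b : Finset (Fin n)) then (1 : ZMod 2) else 0) := by
      rw [Fintype.sum_eq_single b]
      · simp
      · intro a hab
        rw [if_neg (fun hc => hab (Subtype.ext hc)), mul_zero]
    have final : v b - w b = 0 := by
      rw [expand]
      have hrw : ∀ a : ↥F, (v a - w a) *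
          (if (a : Finset (Fin n)) = (b : Finset (Fin n)) then (1 : ZMod 2) else 0)
          = (∑ T ∈ SS n D, (v a - w a) * (ind T (a : Finset (Fin n)) * Gf T b))
            + (∑ U ∈ SS n D, (v a - w a) * (Hf U (a : Finset (Fin n)) * ind U (b : Finset (Fin n)))) := by
        intro a
        rw [key a a.2 b b.2, mul_add, Finset.mul_sum, Finset.mul_sum]
      rw [Finset.sum_congr rfl fun a _ => hrw a, Finset.sum_add_distrib]
      rw [Finset.sum_comm, Finset.sum_comm (s := (univ : Finset ↥F))]
      have z1 : ∀ T ∈ SS n D, ∑ a : ↥F, (v a - w a) * (ind T (a : Finset (Fin n)) * Gf T b) = 0 := by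
        intro T hT
        have : ∑ a : ↥F, (v a - w a) * (ind T (a : Finset (Fin n)) * Gf T b)
            = (∑ a : ↥F, (v a - w a) * ind T (a : Finset (Fin n))) * Gf T b := by
          rw [Finset.sum_mul]
          exact Finset.sum_congr rfl fun a _ => by ring
        rw [this, hTall ⟨T, hT⟩, zero_mul]
      have z2 : ∀ U ∈ SS n D, ∑ a : ↥F, (v a - w a) * (Hf U (a : Finset (Fin n)) * ind U (b : Finset (Fin n))) = 0 := by
        intro U hU
        have : ∑ a : ↥F, (v a - w a) * (Hf U (a : Finset (Fin n)) * ind U (b : Finset (Fin n)))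
            = (∑ a : ↥F, (v a - w a) * Hf U (a : Finset (Fin n))) * ind U (b : Finset (Fin n)) := by
          rw [Finset.sum_mul]
          exact Finset.sum_congr rfl fun a _ => by ring
        rw [this, hHall ⟨U, hU⟩, zero_mul]
      rw [Finset.sum_congr rfl z1, Finset.sum_congr rfl z2]
      simp
    exact sub_eq_zero.1 final
  have hcard := Fintype.card_le_of_injective Φ hΦ
  simp only [Fintype.card_fun, Fintype.card_prod, Fintype.card_coe, ZMod.card] at hcard
  have h2 : (2:ℕ) ^ F.card ≤ 2 ^ (2 * (SS n D).card) := by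
    rw [two_mul, pow_add]; exact hcard
  exact (Nat.pow_le_pow_iff_right (by norm_num)).1 h2

end DM

open DM in
theorem dvir_moran {n d : ℕ} (hdn : d ≤ n) (F : Finset (Finset (Fin n)))
    (hVC : ∀ M : Finset (Fin n), ShattersFam (symmDiffFam F) M → M.card ≤ d) :
    F.card ≤ 2 * ∑ k ∈ Finset.range (d / 2 + 1), n.choose k := by
  classical
  obtain ⟨c, hc⟩ := expr_delta (B := symmDiffFam F) (d := d) hVC
  have key : ∀ a ∈ F, ∀ b ∈ F, (if a = b then (1 : ZMod 2) else 0) =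
      ∑ T ∈ SS n (d / 2), ind T a * Gfun c d T b
        + ∑ U ∈ SS n (d / 2), Hfun c d U a * ind U b := by
    intro a ha b hb
    have hmem : a ∆ b ∈ symmDiffFam F := Finset.mem_image₂_of_mem ha hb
    have h0 : (if a = b then (1 : ZMod 2) else 0) = (if a ∆ b = ∅ then 1 else 0) := by
      have : (a ∆ b = ∅) ↔ a = b := by rw [← Finset.bot_eq_empty, symmDiff_eq_bot]
      simp [this]
    rw [h0, hc (a ∆ b) hmem, Finset.sum_congr rfl fun S _ => by rw [split S a b],
      regroup c d a b]
  have hbound := final_bound F d (Hfun c d) (Gfun c d) key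
  rwa [card_SS] at hbound
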